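/- For every n ≥ 1 there exists a polynomial p_n with integer coefficients in 2(n−1) variables, depending only on n, with the following property: for every sequence ζ = (ζ_k)_{k≥1} of complex numbers and every N ≥ n, the coefficient of zⁿ in the Taylor expansion at 0 of the quotient c_N/d_N (which is well defined near 0, since d_N(0) = Π_{k=1}^{N}(1+|ζ_k|²)^{-1/2} > 0) equals −conj(ζ_n)·Π_{j=1}^{n−1}(1+|ζ_j|²) + p_n(ζ₁, conj(ζ₁), …, ζ_{n−1}, conj(ζ_{n−1})). In particular this coefficient is independent of N for N ≥ n and independent of ζ_n₊₁, ζ_n₊₂, …, except through the displayed leading term. -/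

import Mathlib

open Polynomial

section Mir
variable {R : Type*} [CommRing R] (σ : R →+* R)

/-- conjugate-mirror at degree `M`. -/
noncomputable def mirS (M : ℕ) (p : Polynomial R) : Polynomial R :=
  ∑ k ∈ Finset.range (M + 1), Polynomial.C (σ (p.coeff k)) * Polynomial.X ^ (M - k)

lemma coeff_mirS (M : ℕ) (p : Polynomial R) (j : ℕ) :
    (mirS σ M p).coeff j = if j ≤ M then σ (p.coeff (M - j)) else 0 := by
  rw [mirS, Polynomial.finset_sum_coeff]
  simp only [Polynomial.coeff_C_mul, Polynomial.coeff_X_pow]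
  by_cases h : j ≤ M
  · rw [Finset.sum_eq_single (M - j)]
    · simp [Nat.sub_sub_self h, h]
    · intro b hb hbne
      have : ¬ (j = M - b) := by
        simp only [Finset.mem_range] at hb; omega
      simp [this]
    · intro hne
      simp only [Finset.mem_range] at hne; omega
  · rw [if_neg h]
    apply Finset.sum_eq_zero
    intro b hb
    have : ¬ (j = M - b) := by simp only [Finset.mem_range] at hb; omega
    simp [this]

lemma mirS_natDegree_le (M : ℕ) (p : Polynomial R) : (mirS σ M p).natDegree ≤ M := by
  apply Polynomial.natDegree_le_iff_coeff_eq_zero.2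
  intro j hj
  rw [coeff_mirS]
  simp [Nat.not_le.2 hj]

lemma mirS_add (M : ℕ) (p q : Polynomial R) :
    mirS σ M (p + q) = mirS σ M p + mirS σ M q := by
  ext j; simp only [coeff_mirS, Polynomial.coeff_add, map_add]
  split <;> simp

lemma mirS_sub (M : ℕ) (p q : Polynomial R) :
    mirS σ M (p - q) = mirS σ M p - mirS σ M q := by
  ext j; simp only [coeff_mirS, Polynomial.coeff_sub, map_sub]
  split <;> simp

lemma mirS_C_mul (M : ℕ) (b : R) (p : Polynomial R) :
    mirS σ M (Polynomial.C b * p) = Polynomial.C (σ b) * mirS σ M p := by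
  ext j; simp only [coeff_mirS, Polynomial.coeff_C_mul, map_mul]
  split <;> simp

lemma mirS_X_mul (M : ℕ) (p : Polynomial R) :
    mirS σ (M + 1) (Polynomial.X * p) = mirS σ M p := by
  ext j
  simp only [coeff_mirS]
  by_cases h : j ≤ M
  · have h' : j ≤ M + 1 := by omega
    rw [if_pos h, if_pos h']
    have : M + 1 - j = (M - j) + 1 := by omega
    rw [this, Polynomial.coeff_X_mul]
  · rw [if_neg h]
    by_cases h2 : j = M + 1
    · subst h2
      simp
    · rw [if_neg (by omega)]

lemma mirS_shift (M : ℕ) (p : Polynomial R) (hp : p.natDegree ≤ M) :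
    mirS σ (M + 1) p = Polynomial.X * mirS σ M p := by
  ext j
  match j with
  | 0 =>
    rw [Polynomial.mul_coeff_zero, Polynomial.coeff_X_zero, zero_mul, coeff_mirS,
      if_pos (by omega : 0 ≤ M + 1),
      Polynomial.coeff_eq_zero_of_natDegree_lt (by omega : p.natDegree < M + 1 - 0), map_zero]
  | j + 1 =>
    rw [Polynomial.coeff_X_mul, coeff_mirS, coeff_mirS]
    by_cases h : j ≤ M
    · rw [if_pos h, if_pos (by omega), (by omega : M + 1 - (j + 1) = M - j)]
    · rw [if_neg h, if_neg (by omega)]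

lemma mirS_mirS (hσ : ∀ x, σ (σ x) = x) (M : ℕ) (p : Polynomial R) (hp : p.natDegree ≤ M) :
    mirS σ M (mirS σ M p) = p := by
  ext j
  rw [coeff_mirS]
  by_cases h : j ≤ M
  · rw [if_pos h, coeff_mirS, if_pos (by omega : M - j ≤ M)]
    rw [(by omega : M - (M - j) = j), hσ]
  · rw [if_neg h, eq_comm]
    exact Polynomial.coeff_eq_zero_of_natDegree_lt (by omega)


lemma mirS_sum_eq (M : ℕ) (p : Polynomial R) :
    ∑ k ∈ Finset.range (M + 1), Polynomial.C (σ (p.coeff k)) * Polynomial.X ^ (M + 1 - k)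
      = Polynomial.X * mirS σ M p := by
  rw [mirS, Finset.mul_sum]
  apply Finset.sum_congr rfl
  intro k hk
  have hk' : k ≤ M := by simpa [Nat.lt_succ_iff] using hk
  rw [(by omega : M + 1 - k = (M - k) + 1), pow_succ]
  ring

end Mir

/-- The pair of polynomials `(c_N, d_N)`: `c_0 = 0`, `d_0 = 1`, and for `N ≥ 1`,
`c_N = (1+|ζ_N|²)^{-1/2} (c_{N-1} − conj(ζ_N) ∑_k conj((d_{N-1})_k) z^{N-k})`,
`d_N = (1+|ζ_N|²)^{-1/2} (d_{N-1} + conj(ζ_N) ∑_k conj((c_{N-1})_k) z^{N-k})`. -/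
noncomputable def cdPair (ζ : ℕ → ℂ) : ℕ → Polynomial ℂ × Polynomial ℂ
  | 0 => (0, 1)
  | (N + 1) =>
    let c := (cdPair ζ N).1
    let d := (cdPair ζ N).2
    let a : ℂ := ((Real.sqrt (1 + ‖ζ (N + 1)‖ ^ 2))⁻¹ : ℝ)
    (Polynomial.C a * (c - Polynomial.C (starRingEnd ℂ (ζ (N + 1))) *
        ∑ k ∈ Finset.range (N + 1),
          Polynomial.C (starRingEnd ℂ (d.coeff k)) * Polynomial.X ^ (N + 1 - k)),
     Polynomial.C a * (d + Polynomial.C (starRingEnd ℂ (ζ (N + 1))) *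
        ∑ k ∈ Finset.range (N + 1),
          Polynomial.C (starRingEnd ℂ (c.coeff k)) * Polynomial.X ^ (N + 1 - k)))

/-- the normalization scalar -/
noncomputable def aa (ζ : ℕ → ℂ) (k : ℕ) : ℝ := (Real.sqrt (1 + ‖ζ k‖ ^ 2))⁻¹

lemma aa_pos (ζ : ℕ → ℂ) (k : ℕ) : 0 < aa ζ k := by
  apply inv_pos.2
  apply Real.sqrt_pos.2
  positivity

lemma aa_sq (ζ : ℕ → ℂ) (k : ℕ) :
    ((aa ζ k : ℂ))^2 * (1 + (starRingEnd ℂ) (ζ k) * ζ k) = 1 := by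
  rw [Complex.conj_mul']
  have h0 : (0:ℝ) < 1 + ‖ζ k‖ ^ 2 := by positivity
  have : ((aa ζ k : ℂ))^2 * (1 + (‖ζ k‖:ℂ) ^ 2) = (((aa ζ k)^2 * (1 + ‖ζ k‖^2) : ℝ) : ℂ) := by
    push_cast; ring
  rw [this, aa, inv_pow, Real.sq_sqrt h0.le, inv_mul_cancel₀ h0.ne']
  norm_num

lemma cdPair_fst (ζ : ℕ → ℂ) (N : ℕ) :
    (cdPair ζ (N + 1)).1 = Polynomial.C (aa ζ (N+1) : ℂ) * ((cdPair ζ N).1 -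
      Polynomial.C (starRingEnd ℂ (ζ (N + 1))) *
        (Polynomial.X * mirS (starRingEnd ℂ) N (cdPair ζ N).2)) := by
  rw [← mirS_sum_eq]
  rfl

lemma cdPair_snd (ζ : ℕ → ℂ) (N : ℕ) :
    (cdPair ζ (N + 1)).2 = Polynomial.C (aa ζ (N+1) : ℂ) * ((cdPair ζ N).2 +
      Polynomial.C (starRingEnd ℂ (ζ (N + 1))) *
        (Polynomial.X * mirS (starRingEnd ℂ) N (cdPair ζ N).1)) := by
  rw [← mirS_sum_eq]
  rfl
lemma cd_natDegree (ζ : ℕ → ℂ) (N : ℕ) :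
    (cdPair ζ N).1.natDegree ≤ N ∧ (cdPair ζ N).2.natDegree ≤ N := by
  induction N with
  | zero => constructor <;> simp [cdPair]
  | succ N ih =>
    have hm1 := mirS_natDegree_le (starRingEnd ℂ) N (cdPair ζ N).1
    have hm2 := mirS_natDegree_le (starRingEnd ℂ) N (cdPair ζ N).2
    constructor
    · rw [cdPair_fst]
      refine (Polynomial.natDegree_C_mul_le _ _).trans ?_
      refine (Polynomial.natDegree_sub_le _ _).trans ?_
      refine max_le (ih.1.trans (by omega)) ?_
      refine (Polynomial.natDegree_mul_le).trans ?_
      simp only [Polynomial.natDegree_C, zero_add]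
      refine (Polynomial.natDegree_mul_le).trans ?_
      simp only [Polynomial.natDegree_X]
      omega
    · rw [cdPair_snd]
      refine (Polynomial.natDegree_C_mul_le _ _).trans ?_
      refine (Polynomial.natDegree_add_le _ _).trans ?_
      refine max_le (ih.2.trans (by omega)) ?_
      refine (Polynomial.natDegree_mul_le).trans ?_
      simp only [Polynomial.natDegree_C, zero_add]
      refine (Polynomial.natDegree_mul_le).trans ?_
      simp only [Polynomial.natDegree_X]
      omega

lemma conj_invol : ∀ x : ℂ, (starRingEnd ℂ) ((starRingEnd ℂ) x) = x := fun x =>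
  Complex.conj_conj x

lemma mirS_cd_fst (ζ : ℕ → ℂ) (N : ℕ) :
    mirS (starRingEnd ℂ) (N + 1) (cdPair ζ (N + 1)).1
      = Polynomial.C (aa ζ (N+1) : ℂ) *
          (Polynomial.X * mirS (starRingEnd ℂ) N (cdPair ζ N).1 -
            Polynomial.C (ζ (N + 1)) * (cdPair ζ N).2) := by
  rw [cdPair_fst, mirS_C_mul, mirS_sub, mirS_C_mul, mirS_X_mul,
    mirS_mirS _ conj_invol N _ (cd_natDegree ζ N).2,
    mirS_shift _ N _ (cd_natDegree ζ N).1]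
  simp [Complex.conj_conj, Complex.conj_ofReal]

lemma mirS_cd_snd (ζ : ℕ → ℂ) (N : ℕ) :
    mirS (starRingEnd ℂ) (N + 1) (cdPair ζ (N + 1)).2
      = Polynomial.C (aa ζ (N+1) : ℂ) *
          (Polynomial.X * mirS (starRingEnd ℂ) N (cdPair ζ N).2 +
            Polynomial.C (ζ (N + 1)) * (cdPair ζ N).1) := by
  rw [cdPair_snd, mirS_C_mul, mirS_add, mirS_C_mul, mirS_X_mul,
    mirS_mirS _ conj_invol N _ (cd_natDegree ζ N).1,
    mirS_shift _ N _ (cd_natDegree ζ N).2]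
  simp [Complex.conj_conj, Complex.conj_ofReal]

lemma cd_invariant (ζ : ℕ → ℂ) (N : ℕ) :
    (cdPair ζ N).1 * mirS (starRingEnd ℂ) N (cdPair ζ N).1 +
      (cdPair ζ N).2 * mirS (starRingEnd ℂ) N (cdPair ζ N).2 = Polynomial.X ^ N := by
  induction N with
  | zero =>
    simp [cdPair, mirS]
  | succ N ih =>
    have key : (Polynomial.C (aa ζ (N+1) : ℂ))^2 *
        (1 + Polynomial.C ((starRingEnd ℂ) (ζ (N+1))) * Polynomial.C (ζ (N+1)))
        = 1 := by
      have h := congrArg (Polynomial.C (R := ℂ)) (aa_sq ζ (N+1))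
      simpa [map_mul, map_add, map_pow, map_one] using h
    rw [mirS_cd_fst, mirS_cd_snd, cdPair_fst, cdPair_snd]
    calc Polynomial.C (aa ζ (N+1) : ℂ) * ((cdPair ζ N).1 -
          Polynomial.C ((starRingEnd ℂ) (ζ (N + 1))) *
            (Polynomial.X * mirS (starRingEnd ℂ) N (cdPair ζ N).2)) *
          (Polynomial.C (aa ζ (N+1) : ℂ) *
            (Polynomial.X * mirS (starRingEnd ℂ) N (cdPair ζ N).1 -
              Polynomial.C (ζ (N + 1)) * (cdPair ζ N).2)) +
        Polynomial.C (aa ζ (N+1) : ℂ) * ((cdPair ζ N).2 +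
          Polynomial.C ((starRingEnd ℂ) (ζ (N + 1))) *
            (Polynomial.X * mirS (starRingEnd ℂ) N (cdPair ζ N).1)) *
          (Polynomial.C (aa ζ (N+1) : ℂ) *
            (Polynomial.X * mirS (starRingEnd ℂ) N (cdPair ζ N).2 +
              Polynomial.C (ζ (N + 1)) * (cdPair ζ N).1))
        = (Polynomial.C (aa ζ (N+1) : ℂ))^2 *
            (1 + Polynomial.C ((starRingEnd ℂ) (ζ (N+1))) * Polynomial.C (ζ (N+1))) *
          (Polynomial.X * ((cdPair ζ N).1 * mirS (starRingEnd ℂ) N (cdPair ζ N).1 +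
            (cdPair ζ N).2 * mirS (starRingEnd ℂ) N (cdPair ζ N).2)) := by ring
      _ = Polynomial.X ^ (N + 1) := by rw [key, ih, one_mul, ← pow_succ']

/-- product of the normalization scalars -/
noncomputable def rfac (ζ : ℕ → ℂ) (N : ℕ) : ℝ := ∏ k ∈ Finset.range N, aa ζ (k + 1)

lemma rfac_pos (ζ : ℕ → ℂ) (N : ℕ) : 0 < rfac ζ N :=
  Finset.prod_pos fun k _ => aa_pos ζ (k + 1)

lemma cd_coeff_zero (ζ : ℕ → ℂ) (N : ℕ) :
    (cdPair ζ N).2.coeff 0 = ((rfac ζ N : ℝ) : ℂ) := by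
  induction N with
  | zero => simp [cdPair, rfac]
  | succ N ih =>
    rw [cdPair_snd]
    simp only [Polynomial.coeff_C_mul, Polynomial.coeff_add, ih, Polynomial.mul_coeff_zero,
      Polynomial.coeff_X_zero, zero_mul, mul_zero, add_zero]
    rw [show rfac ζ (N+1) = rfac ζ N * aa ζ (N+1) from Finset.prod_range_succ _ _,
      Polynomial.coeff_C_zero]
    push_cast
    ring

lemma cd_cross (ζ : ℕ → ℂ) (N : ℕ) :
    (cdPair ζ (N+1)).1 * (cdPair ζ N).2 - (cdPair ζ N).1 * (cdPair ζ (N+1)).2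
      = Polynomial.C (-((aa ζ (N+1) : ℂ) * (starRingEnd ℂ) (ζ (N+1)))) *
          Polynomial.X ^ (N+1) := by
  have h := cd_invariant ζ N
  rw [cdPair_fst, cdPair_snd]
  simp only [map_neg, map_mul]
  calc Polynomial.C (aa ζ (N+1) : ℂ) * ((cdPair ζ N).1 -
        Polynomial.C ((starRingEnd ℂ) (ζ (N + 1))) *
          (Polynomial.X * mirS (starRingEnd ℂ) N (cdPair ζ N).2)) * (cdPair ζ N).2 -
      (cdPair ζ N).1 * (Polynomial.C (aa ζ (N+1) : ℂ) * ((cdPair ζ N).2 +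
        Polynomial.C ((starRingEnd ℂ) (ζ (N + 1))) *
          (Polynomial.X * mirS (starRingEnd ℂ) N (cdPair ζ N).1)))
      = -(Polynomial.C (aa ζ (N+1) : ℂ) * Polynomial.C ((starRingEnd ℂ) (ζ (N+1))) *
          (Polynomial.X *
            ((cdPair ζ N).1 * mirS (starRingEnd ℂ) N (cdPair ζ N).1 +
             (cdPair ζ N).2 * mirS (starRingEnd ℂ) N (cdPair ζ N).2))) := by ring
    _ = _ := by rw [h]; rw [← pow_succ']; ring

lemma cd_const_ne (ζ : ℕ → ℂ) (N : ℕ) :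
    (PowerSeries.constantCoeff (R := ℂ)) ((cdPair ζ N).2 : PowerSeries ℂ) ≠ 0 := by
  rw [Polynomial.constantCoeff_coe, cd_coeff_zero]
  exact_mod_cast (rfac_pos ζ N).ne'

lemma coeff_step (ζ : ℕ → ℂ) (n N : ℕ) (h : n ≤ N) :
    (PowerSeries.coeff (R := ℂ) n) (((cdPair ζ (N+1)).1 : PowerSeries ℂ) *
        ((cdPair ζ (N+1)).2 : PowerSeries ℂ)⁻¹)
      = (PowerSeries.coeff (R := ℂ) n) (((cdPair ζ N).1 : PowerSeries ℂ) *
        ((cdPair ζ N).2 : PowerSeries ℂ)⁻¹) := by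
  set c : PowerSeries ℂ := ((cdPair ζ N).1 : PowerSeries ℂ)
  set d : PowerSeries ℂ := ((cdPair ζ N).2 : PowerSeries ℂ)
  set c' : PowerSeries ℂ := ((cdPair ζ (N+1)).1 : PowerSeries ℂ)
  set d' : PowerSeries ℂ := ((cdPair ζ (N+1)).2 : PowerSeries ℂ)
  set F : PowerSeries ℂ := ((Polynomial.C (-((aa ζ (N+1) : ℂ) * (starRingEnd ℂ) (ζ (N+1)))) *
      Polynomial.X ^ (N+1) : Polynomial ℂ) : PowerSeries ℂ)
  have hcross : c' * d - c * d' = F := by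
    rw [show c' * d - c * d' =
        (((cdPair ζ (N+1)).1 * (cdPair ζ N).2 - (cdPair ζ N).1 * (cdPair ζ (N+1)).2 :
          Polynomial ℂ) : PowerSeries ℂ) by push_cast [Polynomial.coe_mul]; ring]
    rw [cd_cross]
  have hu : d * d⁻¹ = 1 := PowerSeries.mul_inv_cancel _ (cd_const_ne ζ N)
  have hu' : d' * d'⁻¹ = 1 := PowerSeries.mul_inv_cancel _ (cd_const_ne ζ (N+1))
  have hmain : c' * d'⁻¹ = c * d⁻¹ + F * (d⁻¹ * d'⁻¹) := by
    linear_combination (d⁻¹ * d'⁻¹) * hcross - (c' * d'⁻¹) * hu + (c * d⁻¹) * hu'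
  rw [hmain, map_add]
  have hF : (PowerSeries.coeff (R := ℂ) n) (F * (d⁻¹ * d'⁻¹)) = 0 := by
    rw [PowerSeries.coeff_mul]
    apply Finset.sum_eq_zero
    intro p hp
    have hp1 : p.1 ≤ n := by
      have := Finset.HasAntidiagonal.antidiagonal.fst_le hp
      omega
    have : (PowerSeries.coeff (R := ℂ) p.1) F = 0 := by
      rw [Polynomial.coeff_coe, Polynomial.coeff_C_mul, Polynomial.coeff_X_pow,
        if_neg (by omega), mul_zero]
    rw [this, zero_mul]
  rw [hF, add_zero]

lemma coeff_stable (ζ : ℕ → ℂ) (n N : ℕ) (h : n ≤ N) :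
    (PowerSeries.coeff (R := ℂ) n) (((cdPair ζ N).1 : PowerSeries ℂ) *
        ((cdPair ζ N).2 : PowerSeries ℂ)⁻¹)
      = (PowerSeries.coeff (R := ℂ) n) (((cdPair ζ n).1 : PowerSeries ℂ) *
        ((cdPair ζ n).2 : PowerSeries ℂ)⁻¹) := by
  induction N, h using Nat.le_induction with
  | base => rfl
  | succ N hN ih => rw [coeff_step ζ n N hN, ih]

abbrev UA (m : ℕ) := MvPolynomial (Fin (2 * m)) ℤ

def swapFun (m : ℕ) (i : Fin (2 * m)) : Fin (2 * m) :=
  if _ : i.val % 2 = 0 then ⟨i.val + 1, by omega⟩ else ⟨i.val - 1, by omega⟩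

lemma swapFun_val (m : ℕ) (i : Fin (2 * m)) :
    (swapFun m i).val = if i.val % 2 = 0 then i.val + 1 else i.val - 1 := by
  unfold swapFun
  split_ifs <;> rfl

lemma swapFun_invol (m : ℕ) (i : Fin (2 * m)) : swapFun m (swapFun m i) = i := by
  apply Fin.ext
  rw [swapFun_val, swapFun_val]
  split_ifs <;> omega

noncomputable def σU (m : ℕ) : UA m →+* UA m :=
  (MvPolynomial.rename (swapFun m)).toRingHom

lemma σU_invol (m : ℕ) : ∀ x : UA m, σU m (σU m x) = x := by
  intro x
  show MvPolynomial.rename _ (MvPolynomial.rename _ x) = x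
  rw [MvPolynomial.rename_rename]
  have : (swapFun m ∘ swapFun m) = id := funext (swapFun_invol m)
  rw [this, MvPolynomial.rename_id, AlgHom.id_apply]

/-- the universal element representing `conj ζ (N+1)` -/
noncomputable def Zc (m N : ℕ) : UA m :=
  if h : N < m then MvPolynomial.X ⟨2 * N + 1, by omega⟩ else 0

noncomputable def ucd (m : ℕ) : ℕ → Polynomial (UA m) × Polynomial (UA m)
  | 0 => (0, 1)
  | (N + 1) =>
    let c := (ucd m N).1
    let d := (ucd m N).2
    (c - Polynomial.C (Zc m N) * (Polynomial.X * mirS (σU m) N d),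
     d + Polynomial.C (Zc m N) * (Polynomial.X * mirS (σU m) N c))

/-- the evaluation used in the statement -/
noncomputable def vmap (m : ℕ) (ζ : ℕ → ℂ) : Fin (2 * m) → ℂ := fun i =>
  if i.val % 2 = 0 then ζ (i.val / 2 + 1) else starRingEnd ℂ (ζ (i.val / 2 + 1))

noncomputable def evA (m : ℕ) (ζ : ℕ → ℂ) : UA m →+* ℂ :=
  (MvPolynomial.aeval (vmap m ζ)).toRingHom

lemma evA_swap (m : ℕ) (ζ : ℕ → ℂ) :
    ∀ x : UA m, evA m ζ (σU m x) = starRingEnd ℂ (evA m ζ x) := by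
  have : (evA m ζ).comp (σU m) = (starRingEnd ℂ).comp (evA m ζ) := by
    apply MvPolynomial.ringHom_ext
    · intro r
      simp [evA, σU, map_intCast]
    · intro i
      show evA m ζ (MvPolynomial.rename (swapFun m) (MvPolynomial.X i))
        = starRingEnd ℂ (evA m ζ (MvPolynomial.X i))
      rw [MvPolynomial.rename_X]
      show MvPolynomial.aeval (vmap m ζ) (MvPolynomial.X (swapFun m i))
        = starRingEnd ℂ (MvPolynomial.aeval (vmap m ζ) (MvPolynomial.X i))
      rw [MvPolynomial.aeval_X, MvPolynomial.aeval_X]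
      by_cases h : i.val % 2 = 0
      · have h1 : (swapFun m i).val = i.val + 1 := by simp [swapFun, h]
        simp only [vmap, h1, if_pos h]
        rw [if_neg (by omega), (by omega : (i.val + 1)/2 = i.val/2)]
      · have h1 : (swapFun m i).val = i.val - 1 := by simp [swapFun, h]
        simp only [vmap, h1, if_neg h]
        rw [if_pos (by omega), (by omega : (i.val - 1)/2 = i.val/2), Complex.conj_conj]
  intro x
  exact RingHom.congr_fun this x

lemma evA_Zc (m N : ℕ) (ζ : ℕ → ℂ) (h : N < m) :
    evA m ζ (Zc m N) = starRingEnd ℂ (ζ (N + 1)) := by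
  rw [Zc, dif_pos h]
  show MvPolynomial.aeval (vmap m ζ) (MvPolynomial.X _) = _
  rw [MvPolynomial.aeval_X, vmap]
  simp only
  rw [if_neg (by omega), (by omega : (2*N+1)/2 = N)]

lemma map_mirS {R S : Type*} [CommRing R] [CommRing S] (f : R →+* S) (σ : R →+* R)
    (τ : S →+* S) (hc : ∀ x, f (σ x) = τ (f x)) (M : ℕ) (p : Polynomial R) :
    Polynomial.map f (mirS σ M p) = mirS τ M (Polynomial.map f p) := by
  ext j
  rw [Polynomial.coeff_map, coeff_mirS, coeff_mirS, Polynomial.coeff_map]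
  split
  · rw [hc]
  · rw [map_zero]

lemma cd_eq_map (ζ : ℕ → ℂ) (m : ℕ) : ∀ N, N ≤ m →
    (cdPair ζ N).1 = Polynomial.C ((rfac ζ N : ℝ) : ℂ) *
        Polynomial.map (evA m ζ) (ucd m N).1
      ∧ (cdPair ζ N).2 = Polynomial.C ((rfac ζ N : ℝ) : ℂ) *
        Polynomial.map (evA m ζ) (ucd m N).2 := by
  intro N
  induction N with
  | zero => intro _; constructor <;> simp [cdPair, ucd, rfac]
  | succ N ih =>
    intro hNm
    obtain ⟨h1, h2⟩ := ih (by omega)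
    have hrfac : Polynomial.C ((rfac ζ (N+1) : ℝ) : ℂ)
        = Polynomial.C ((rfac ζ N : ℝ) : ℂ) * Polynomial.C ((aa ζ (N+1) : ℝ) : ℂ) := by
      rw [← Polynomial.C_mul]
      congr 1
      rw [show rfac ζ (N+1) = rfac ζ N * aa ζ (N+1) from Finset.prod_range_succ _ _]
      push_cast; ring
    have hmir1 : mirS (starRingEnd ℂ) N (cdPair ζ N).1
        = Polynomial.C ((rfac ζ N : ℝ) : ℂ) *
            Polynomial.map (evA m ζ) (mirS (σU m) N (ucd m N).1) := by
      rw [h1, mirS_C_mul, Complex.conj_ofReal,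
        map_mirS (evA m ζ) (σU m) (starRingEnd ℂ) (evA_swap m ζ) N]
    have hmir2 : mirS (starRingEnd ℂ) N (cdPair ζ N).2
        = Polynomial.C ((rfac ζ N : ℝ) : ℂ) *
            Polynomial.map (evA m ζ) (mirS (σU m) N (ucd m N).2) := by
      rw [h2, mirS_C_mul, Complex.conj_ofReal,
        map_mirS (evA m ζ) (σU m) (starRingEnd ℂ) (evA_swap m ζ) N]
    have hz : evA m ζ (Zc m N) = starRingEnd ℂ (ζ (N + 1)) := evA_Zc m N ζ (by omega)
    constructor
    · rw [cdPair_fst, show (ucd m (N+1)).1 =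
        (ucd m N).1 - Polynomial.C (Zc m N) * (Polynomial.X * mirS (σU m) N (ucd m N).2)
        from rfl]
      rw [Polynomial.map_sub, Polynomial.map_mul, Polynomial.map_mul, Polynomial.map_C,
        Polynomial.map_X, hz, h1, hmir2, hrfac]
      ring
    · rw [cdPair_snd, show (ucd m (N+1)).2 =
        (ucd m N).2 + Polynomial.C (Zc m N) * (Polynomial.X * mirS (σU m) N (ucd m N).1)
        from rfl]
      rw [Polynomial.map_add, Polynomial.map_mul, Polynomial.map_mul, Polynomial.map_C,
        Polynomial.map_X, hz, h2, hmir1, hrfac]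
      ring

lemma coeff_div_eq_poly (P Q : Polynomial ℂ) (hQ : Q.coeff 0 = 1) (n : ℕ) :
    (PowerSeries.coeff (R := ℂ) n) ((P : PowerSeries ℂ) * (Q : PowerSeries ℂ)⁻¹)
      = (P * ∑ k ∈ Finset.range (n+1), (1 - Q)^k).coeff n := by
  have hQ0 : PowerSeries.constantCoeff (R := ℂ) (Q : PowerSeries ℂ) = 1 := by
    rw [Polynomial.constantCoeff_coe, hQ]
  have hQne : PowerSeries.constantCoeff (R := ℂ) (Q : PowerSeries ℂ) ≠ 0 := by
    rw [hQ0]; exact one_ne_zero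
  have hu : (Q : PowerSeries ℂ) * (Q : PowerSeries ℂ)⁻¹ = 1 :=
    PowerSeries.mul_inv_cancel _ hQne
  set Qs : PowerSeries ℂ := (Q : PowerSeries ℂ) with hQs
  set S : PowerSeries ℂ := ∑ k ∈ Finset.range (n+1), (1 - Qs)^k with hS
  have hQS : Qs * S = 1 - (1 - Qs)^(n+1) := by
    have h := geom_sum_mul (1 - Qs) (n+1)
    rw [← hS] at h
    linear_combination -h
  have hPS : (P : PowerSeries ℂ) * Qs⁻¹
      = (P : PowerSeries ℂ) * S + (P : PowerSeries ℂ) * Qs⁻¹ * (1 - Qs)^(n+1) := by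
    linear_combination -((P : PowerSeries ℂ) * Qs⁻¹) * hQS + ((P : PowerSeries ℂ) * S) * hu
  have hzero : (PowerSeries.coeff (R := ℂ) n)
      ((P : PowerSeries ℂ) * Qs⁻¹ * (1 - Qs)^(n+1)) = 0 := by
    have hdvd : (PowerSeries.X : PowerSeries ℂ)^(n+1) ∣
        (P : PowerSeries ℂ) * Qs⁻¹ * (1 - Qs)^(n+1) :=
      Dvd.dvd.mul_left (pow_dvd_pow_of_dvd (PowerSeries.X_dvd_iff.2 (by simp [hQ0])) (n+1)) _
    exact PowerSeries.X_pow_dvd_iff.1 hdvd n (lt_add_one n)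
  have hcoe : ((P * ∑ k ∈ Finset.range (n+1), (1 - Q)^k : Polynomial ℂ) : PowerSeries ℂ)
      = (P : PowerSeries ℂ) * S := by
    rw [hS, hQs]
    simp only [← Polynomial.coeToPowerSeries.ringHom_apply, map_mul, map_sum, map_pow,
      map_sub, map_one]
  rw [hPS, map_add, hzero, add_zero, ← hcoe, Polynomial.coeff_coe]

lemma coeff_jump (ζ : ℕ → ℂ) (M : ℕ) :
    (PowerSeries.coeff (R := ℂ) (M+1)) (((cdPair ζ (M+1)).1 : PowerSeries ℂ) *
        ((cdPair ζ (M+1)).2 : PowerSeries ℂ)⁻¹)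
      = (PowerSeries.coeff (R := ℂ) (M+1)) (((cdPair ζ M).1 : PowerSeries ℂ) *
          ((cdPair ζ M).2 : PowerSeries ℂ)⁻¹)
        + (-((aa ζ (M+1) : ℂ) * starRingEnd ℂ (ζ (M+1)))) *
            (((rfac ζ M : ℝ) : ℂ)⁻¹ * ((rfac ζ (M+1) : ℝ) : ℂ)⁻¹) := by
  set c : PowerSeries ℂ := ((cdPair ζ M).1 : PowerSeries ℂ)
  set d : PowerSeries ℂ := ((cdPair ζ M).2 : PowerSeries ℂ)
  set c' : PowerSeries ℂ := ((cdPair ζ (M+1)).1 : PowerSeries ℂ)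
  set d' : PowerSeries ℂ := ((cdPair ζ (M+1)).2 : PowerSeries ℂ)
  set b : ℂ := -((aa ζ (M+1) : ℂ) * starRingEnd ℂ (ζ (M+1))) with hb
  set F : PowerSeries ℂ := ((Polynomial.C b * Polynomial.X ^ (M+1) : Polynomial ℂ) :
    PowerSeries ℂ) with hF
  have hcross : c' * d - c * d' = F := by
    rw [show c' * d - c * d' =
        (((cdPair ζ (M+1)).1 * (cdPair ζ M).2 - (cdPair ζ M).1 * (cdPair ζ (M+1)).2 :
          Polynomial ℂ) : PowerSeries ℂ) by push_cast [Polynomial.coe_mul]; ring]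
    rw [cd_cross]
  have hu : d * d⁻¹ = 1 := PowerSeries.mul_inv_cancel _ (cd_const_ne ζ M)
  have hu' : d' * d'⁻¹ = 1 := PowerSeries.mul_inv_cancel _ (cd_const_ne ζ (M+1))
  have hmain : c' * d'⁻¹ = c * d⁻¹ + F * (d⁻¹ * d'⁻¹) := by
    linear_combination (d⁻¹ * d'⁻¹) * hcross - (c' * d'⁻¹) * hu + (c * d⁻¹) * hu'
  rw [hmain, map_add]
  congr 1
  have hFX : F = (PowerSeries.X : PowerSeries ℂ)^(M+1) * PowerSeries.C (R := ℂ) b := by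
    rw [hF]
    push_cast [Polynomial.coe_mul, Polynomial.coe_C, Polynomial.coe_pow, Polynomial.coe_X]
    ring
  rw [hFX, mul_assoc]
  have hXc := PowerSeries.coeff_X_pow_mul ((PowerSeries.C (R := ℂ)) b * (d⁻¹ * d'⁻¹)) (M+1) 0
  rw [zero_add] at hXc
  have e1 : PowerSeries.constantCoeff (R := ℂ) d = ((rfac ζ M : ℝ) : ℂ) := by
    rw [show d = ((cdPair ζ M).2 : PowerSeries ℂ) from rfl, Polynomial.constantCoeff_coe,
      cd_coeff_zero]
  have e2 : PowerSeries.constantCoeff (R := ℂ) d' = ((rfac ζ (M+1) : ℝ) : ℂ) := by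
    rw [show d' = ((cdPair ζ (M+1)).2 : PowerSeries ℂ) from rfl, Polynomial.constantCoeff_coe,
      cd_coeff_zero]
  rw [hXc, PowerSeries.coeff_zero_eq_constantCoeff, map_mul, map_mul,
    PowerSeries.constantCoeff_C, PowerSeries.constantCoeff_inv, PowerSeries.constantCoeff_inv,
    e1, e2]

lemma scalar_eq (ζ : ℕ → ℂ) (M : ℕ) :
    ((aa ζ (M+1) : ℝ) : ℂ) * (((rfac ζ M : ℝ) : ℂ)⁻¹ * ((rfac ζ (M+1) : ℝ) : ℂ)⁻¹)
      = ∏ j ∈ Finset.range M, ((1 : ℂ) + (‖ζ (j + 1)‖ ^ 2 : ℝ)) := by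
  have haan : aa ζ (M+1) ≠ 0 := (aa_pos ζ (M+1)).ne'
  have h2 : (rfac ζ M)⁻¹ * (rfac ζ M)⁻¹ = ∏ j ∈ Finset.range M, (1 + ‖ζ (j+1)‖^2) := by
    rw [rfac, ← Finset.prod_inv_distrib, ← Finset.prod_mul_distrib]
    apply Finset.prod_congr rfl
    intro j _
    rw [aa, inv_inv, Real.mul_self_sqrt (by positivity)]
  have hr : aa ζ (M+1) * ((rfac ζ M)⁻¹ * (rfac ζ (M+1))⁻¹)
      = ∏ j ∈ Finset.range M, (1 + ‖ζ (j+1)‖^2) := by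
    rw [show rfac ζ (M+1) = rfac ζ M * aa ζ (M+1) from Finset.prod_range_succ _ _, mul_inv]
    rw [show aa ζ (M+1) * ((rfac ζ M)⁻¹ * ((rfac ζ M)⁻¹ * (aa ζ (M+1))⁻¹))
        = (aa ζ (M+1) * (aa ζ (M+1))⁻¹) * ((rfac ζ M)⁻¹ * (rfac ζ M)⁻¹) by ring]
    rw [mul_inv_cancel₀ haan, one_mul, h2]
  calc ((aa ζ (M+1) : ℝ) : ℂ) * (((rfac ζ M : ℝ) : ℂ)⁻¹ * ((rfac ζ (M+1) : ℝ) : ℂ)⁻¹)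
      = ((aa ζ (M+1) * ((rfac ζ M)⁻¹ * (rfac ζ (M+1))⁻¹) : ℝ) : ℂ) := by push_cast; ring
    _ = ((∏ j ∈ Finset.range M, (1 + ‖ζ (j+1)‖^2) : ℝ) : ℂ) := by rw [hr]
    _ = ∏ j ∈ Finset.range M, ((1 : ℂ) + (‖ζ (j + 1)‖ ^ 2 : ℝ)) := by push_cast; rfl

lemma coeff_as_eval (ζ : ℕ → ℂ) (m n : ℕ) :
    (PowerSeries.coeff (R := ℂ) n) (((cdPair ζ m).1 : PowerSeries ℂ) *
        ((cdPair ζ m).2 : PowerSeries ℂ)⁻¹)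
      = evA m ζ (((ucd m m).1 *
          ∑ k ∈ Finset.range (n+1), (1 - (ucd m m).2)^k).coeff n) := by
  obtain ⟨h1, h2⟩ := cd_eq_map ζ m m le_rfl
  have hrne : ((rfac ζ m : ℝ) : ℂ) ≠ 0 := by exact_mod_cast (rfac_pos ζ m).ne'
  have hQ1 : (Polynomial.map (evA m ζ) (ucd m m).2).coeff 0 = 1 := by
    have h := cd_coeff_zero ζ m
    rw [h2, Polynomial.coeff_C_mul] at h
    exact mul_left_cancel₀ hrne (by rw [h, mul_one])
  have hps : ((cdPair ζ m).1 : PowerSeries ℂ) * ((cdPair ζ m).2 : PowerSeries ℂ)⁻¹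
      = ((Polynomial.map (evA m ζ) (ucd m m).1 : Polynomial ℂ) : PowerSeries ℂ) *
        ((Polynomial.map (evA m ζ) (ucd m m).2 : Polynomial ℂ) : PowerSeries ℂ)⁻¹ := by
    rw [h1, h2, Polynomial.coe_mul, Polynomial.coe_mul, Polynomial.coe_C,
      PowerSeries.mul_inv_rev, PowerSeries.C_inv]
    have hC : PowerSeries.C (R := ℂ) ((rfac ζ m : ℝ) : ℂ) *
        PowerSeries.C (R := ℂ) (((rfac ζ m : ℝ) : ℂ))⁻¹ = 1 := by
      rw [← map_mul, mul_inv_cancel₀ hrne, map_one]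
    calc PowerSeries.C (R := ℂ) ((rfac ζ m : ℝ) : ℂ) *
          ((Polynomial.map (evA m ζ) (ucd m m).1 : Polynomial ℂ) : PowerSeries ℂ) *
          (((Polynomial.map (evA m ζ) (ucd m m).2 : Polynomial ℂ) : PowerSeries ℂ)⁻¹ *
            PowerSeries.C (R := ℂ) (((rfac ζ m : ℝ) : ℂ))⁻¹)
        = (PowerSeries.C (R := ℂ) ((rfac ζ m : ℝ) : ℂ) * PowerSeries.C (R := ℂ) (((rfac ζ m : ℝ) : ℂ))⁻¹) *
          (((Polynomial.map (evA m ζ) (ucd m m).1 : Polynomial ℂ) : PowerSeries ℂ) *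
            ((Polynomial.map (evA m ζ) (ucd m m).2 : Polynomial ℂ) : PowerSeries ℂ)⁻¹) := by
          ring
      _ = _ := by rw [hC, one_mul]
  rw [hps, coeff_div_eq_poly _ _ hQ1 n]
  rw [show (Polynomial.map (evA m ζ) (ucd m m).1) *
        ∑ k ∈ Finset.range (n+1), (1 - Polynomial.map (evA m ζ) (ucd m m).2)^k
      = Polynomial.map (evA m ζ) ((ucd m m).1 *
        ∑ k ∈ Finset.range (n+1), (1 - (ucd m m).2)^k) by
    simp only [← Polynomial.coe_mapRingHom, map_mul, map_sum, map_pow, map_sub, map_one]]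
  rw [Polynomial.coeff_map]

/-- For every `n ≥ 1` there is an integer polynomial `p` in `2(n−1)` variables, depending
only on `n`, such that for every sequence `ζ` and every `N ≥ n`, the `n`-th Taylor
coefficient at `0` of `c_N / d_N` (well defined since `d_N(0) ≠ 0`; formally, the `n`-th
coefficient of the power series `c_N · d_N⁻¹`) equals
`−conj(ζ_n)·Π_{j=1}^{n−1}(1+|ζ_j|²) + p(ζ₁, conj ζ₁, …, ζ_{n−1}, conj ζ_{n−1})`. -/
theorem stmt3 (n : ℕ) (hn : 1 ≤ n) :
    ∃ p : MvPolynomial (Fin (2 * (n - 1))) ℤ,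
      ∀ (ζ : ℕ → ℂ) (N : ℕ), n ≤ N →
        (PowerSeries.coeff (R := ℂ) n)
            (((cdPair ζ N).1 : PowerSeries ℂ) * ((cdPair ζ N).2 : PowerSeries ℂ)⁻¹)
          = -(starRingEnd ℂ (ζ n)) *
              (∏ j ∈ Finset.range (n - 1), ((1 : ℂ) + (‖ζ (j + 1)‖ ^ 2 : ℝ)))
            + MvPolynomial.aeval
                (fun i : Fin (2 * (n - 1)) =>
                  if i.val % 2 = 0 then ζ (i.val / 2 + 1)
                  else starRingEnd ℂ (ζ (i.val / 2 + 1))) p := by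
  obtain ⟨M, rfl⟩ : ∃ M, n = M + 1 := ⟨n - 1, by omega⟩
  simp only [Nat.add_sub_cancel]
  refine ⟨((ucd M M).1 * ∑ k ∈ Finset.range ((M+1)+1), (1 - (ucd M M).2)^k).coeff (M+1),
    fun ζ N hN => ?_⟩
  rw [coeff_stable ζ (M+1) N hN, coeff_jump ζ M, coeff_as_eval ζ M (M+1)]
  have hsc : (-((aa ζ (M+1) : ℂ) * starRingEnd ℂ (ζ (M+1)))) *
      (((rfac ζ M : ℝ) : ℂ)⁻¹ * ((rfac ζ (M+1) : ℝ) : ℂ)⁻¹)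
      = -(starRingEnd ℂ (ζ (M+1))) *
          (∏ j ∈ Finset.range M, ((1 : ℂ) + (‖ζ (j + 1)‖ ^ 2 : ℝ))) := by
    rw [← scalar_eq ζ M]
    ring
  rw [hsc, add_comm]
  congr 1
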